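/- For every n ≥ 0, the number of covering pairs H(n,1) in the Fibonacci cube of order n satisfies H(n,1) = Σ_{k=1}^{⌈n/2⌉} k · C(n - k + 1, k). -/

import Mathlib

open Finset

/-- The independent subsets of the h-th power of the path on vertices {1,...,n}:
subsets of {1,...,n} in which any two distinct elements differ by more than h. -/
def Indep (n h : ℕ) : Finset (Finset ℕ) :=
  (Finset.Icc 1 n).powerset.filter (fun S => ∀ a ∈ S, ∀ b ∈ S, a < b → h < b - a)

/-- The independent k-subsets. -/
def IndepK (n h k : ℕ) : Finset (Finset ℕ) :=
  (Indep n h).filter (fun S => S.card = k)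

/-- The number of covering pairs (S,T): T ⊆ S, |S| = |T| + 1, both independent. -/
def coverCount (n h : ℕ) : ℕ :=
  ((Indep n h ×ˢ Indep n h).filter
    (fun p => p.2 ⊆ p.1 ∧ p.1.card = p.2.card + 1)).card

lemma mem_Indep {n h : ℕ} {S : Finset ℕ} :
    S ∈ Indep n h ↔ S ⊆ Finset.Icc 1 n ∧ ∀ a ∈ S, ∀ b ∈ S, a < b → h < b - a := by
  simp [Indep]

lemma Indep_subset_closed {n h : ℕ} {S T : Finset ℕ} (hS : S ∈ Indep n h) (hTS : T ⊆ S) :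
    T ∈ Indep n h := by
  rw [mem_Indep] at *
  exact ⟨hTS.trans hS.1, fun a ha b hb => hS.2 a (hTS ha) b (hTS hb)⟩

lemma fiber_card {n : ℕ} {S : Finset ℕ} (hS : S ∈ Indep n 1) :
    ((Indep n 1).filter (fun T => T ⊆ S ∧ S.card = T.card + 1)).card = S.card := by
  rcases Nat.eq_zero_or_pos S.card with h0 | hpos
  · rw [h0]
    convert Finset.card_empty
    rw [Finset.filter_eq_empty_iff]
    intro T _
    rintro ⟨-, h⟩
    omega
  · have : (Indep n 1).filter (fun T => T ⊆ S ∧ S.card = T.card + 1)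
        = S.powersetCard (S.card - 1) := by
      ext T
      simp only [Finset.mem_filter, Finset.mem_powersetCard]
      constructor
      · rintro ⟨-, hTS, hc⟩
        exact ⟨hTS, by omega⟩
      · rintro ⟨hTS, hc⟩
        exact ⟨Indep_subset_closed hS hTS, hTS, by omega⟩
    rw [this, Finset.card_powersetCard]
    have : S.card - 1 + 1 = S.card := by omega
    rw [Nat.choose_symm (by omega)]
    simp [Nat.sub_sub_self (by omega : 1 ≤ S.card)]

lemma step1 (n : ℕ) : coverCount n 1 = ∑ S ∈ Indep n 1, S.card := by
  unfold coverCount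
  rw [Finset.card_filter, Finset.sum_product]
  refine Finset.sum_congr rfl fun S hS => ?_
  rw [← Finset.card_filter]
  exact fiber_card hS

lemma mem_IndepK {n h k : ℕ} {S : Finset ℕ} :
    S ∈ IndepK n h k ↔ S ∈ Indep n h ∧ S.card = k := by
  simp [IndepK]

lemma claim1 (n k : ℕ) :
    (IndepK (n+2) 1 (k+1)).filter (fun S => (n+2) ∉ S) = IndepK (n+1) 1 (k+1) := by
  ext S
  simp only [Finset.mem_filter, mem_IndepK, mem_Indep]
  constructor
  · rintro ⟨⟨⟨hsub, hind⟩, hc⟩, hnm⟩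
    refine ⟨⟨fun a ha => ?_, hind⟩, hc⟩
    have := hsub ha
    simp only [Finset.mem_Icc] at this ⊢
    have : a ≠ n + 2 := fun h => hnm (h ▸ ha)
    omega
  · rintro ⟨⟨hsub, hind⟩, hc⟩
    have hbound : ∀ a ∈ S, a ≤ n + 1 := fun a ha => (Finset.mem_Icc.mp (hsub ha)).2
    refine ⟨⟨⟨fun a ha => ?_, hind⟩, hc⟩, fun hm => by have := hbound _ hm; omega⟩
    have := hsub ha
    simp only [Finset.mem_Icc] at this ⊢
    omega

lemma claim2 (n k : ℕ) :
    ((IndepK (n+2) 1 (k+1)).filter (fun S => (n+2) ∈ S)).card = (IndepK n 1 k).card := by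
  refine Finset.card_bij' (fun S _ => S.erase (n+2)) (fun T _ => insert (n+2) T) ?_ ?_ ?_ ?_
  · rintro S hS
    simp only [Finset.mem_filter, mem_IndepK, mem_Indep] at hS
    obtain ⟨⟨⟨hsub, hind⟩, hc⟩, hm⟩ := hS
    rw [mem_IndepK, mem_Indep]
    refine ⟨⟨fun a ha => ?_, fun a ha b hb hab =>
      hind a (Finset.mem_of_mem_erase ha) b (Finset.mem_of_mem_erase hb) hab⟩, ?_⟩
    · obtain ⟨hane, haS⟩ := Finset.mem_erase.mp ha
      have h1 := Finset.mem_Icc.mp (hsub haS)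
      have h2 : a ≠ n + 1 := by
        intro h
        have := hind a haS (n+2) hm (by omega)
        omega
      simp only [Finset.mem_Icc]
      omega
    · simp [Finset.card_erase_of_mem hm, hc]
  · rintro T hT
    rw [mem_IndepK, mem_Indep] at hT
    obtain ⟨⟨hsub, hind⟩, hc⟩ := hT
    have hbound : ∀ a ∈ T, 1 ≤ a ∧ a ≤ n := fun a ha => Finset.mem_Icc.mp (hsub ha)
    have hnm : (n+2) ∉ T := fun h => by have := hbound _ h; omega
    simp only [Finset.mem_filter, mem_IndepK, mem_Indep]
    refine ⟨⟨⟨fun a ha => ?_, ?_⟩, ?_⟩, Finset.mem_insert_self _ _⟩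
    · rcases Finset.mem_insert.mp ha with h | h
      · simp [h]
      · have := hbound _ h
        simp only [Finset.mem_Icc]
        omega
    · intro a ha b hb hab
      rcases Finset.mem_insert.mp ha with h | h <;> rcases Finset.mem_insert.mp hb with h' | h'
      · omega
      · have := hbound _ h'; omega
      · have := hbound _ h; omega
      · exact hind a h b h' hab
    · rw [Finset.card_insert_of_notMem hnm, hc]
  · intro S hS
    simp only [Finset.mem_filter] at hS
    exact Finset.insert_erase hS.2
  · intro T hT
    rw [mem_IndepK, mem_Indep] at hT
    have hnm : (n+2) ∉ T := fun h => by have := Finset.mem_Icc.mp (hT.1.1 h); omega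
    exact Finset.erase_insert hnm

lemma rec_split (n k : ℕ) :
    (IndepK (n+2) 1 (k+1)).card = (IndepK (n+1) 1 (k+1)).card + (IndepK n 1 k).card := by
  rw [← claim1 n k, ← claim2 n k]
  have := Finset.card_filter_add_card_filter_not
    (s := IndepK (n+2) 1 (k+1)) (p := fun S => (n+2) ∈ S)
  omega

lemma indepK_zero (n : ℕ) : (IndepK n 1 0).card = 1 := by
  have : IndepK n 1 0 = {∅} := by
    ext S
    simp only [mem_IndepK, mem_Indep, Finset.card_eq_zero, Finset.mem_singleton]
    constructor
    · rintro ⟨-, h⟩; exact h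
    · rintro rfl; simp
  simp [this]

lemma indep_zero : Indep 0 1 = {∅} := by decide

lemma indep_one : Indep 1 1 = {∅, {1}} := by decide

lemma indepK_card (n : ℕ) : ∀ k, (IndepK n 1 k).card =
    if 2*k ≤ n+1 then Nat.choose (n+1-k) k else 0 := by
  induction n using Nat.twoStepInduction with
  | zero =>
    intro k
    match k with
    | 0 => simpa using indepK_zero 0
    | k+1 =>
      have : IndepK 0 1 (k+1) = ∅ := by
        rw [Finset.eq_empty_iff_forall_notMem]
        intro S hS
        rw [mem_IndepK, indep_zero] at hS
        simp only [Finset.mem_singleton] at hS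
        obtain ⟨rfl, hc⟩ := hS
        simp at hc
      rw [this]
      simp
  | one =>
    intro k
    match k with
    | 0 => simpa using indepK_zero 1
    | 1 =>
      have : IndepK 1 1 1 = {{1}} := by
        ext S
        rw [mem_IndepK, indep_one]
        simp only [Finset.mem_insert, Finset.mem_singleton]
        constructor
        · rintro ⟨h | h, hc⟩
          · subst h; simp at hc
          · exact h
        · rintro rfl; simp
      rw [this]; simp
    | k+2 =>
      have : IndepK 1 1 (k+2) = ∅ := by
        rw [Finset.eq_empty_iff_forall_notMem]
        intro S hS
        rw [mem_IndepK, indep_one] at hS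
        simp only [Finset.mem_insert, Finset.mem_singleton] at hS
        obtain ⟨h | h, hc⟩ := hS <;> subst h <;> simp at hc
      rw [this]
      have : ¬ (2*(k+2) ≤ 1+1) := by omega
      simp [this]
  | more n ih ih1 =>
    intro k
    match k with
    | 0 => simpa using indepK_zero (n+2)
    | k+1 =>
      rw [rec_split, ih1 (k+1), ih k]
      rcases Nat.lt_or_ge n (2*k) with h | h
      · -- 2k ≥ n+1
        rcases Nat.eq_or_lt_of_le (Nat.succ_le_of_lt h) with heq | hlt
        · -- 2k = n+1
          have h1 : ¬ (2*(k+1) ≤ n+1+1) := by omega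
          have h2 : 2*k ≤ n+1 := by omega
          have h3 : 2*(k+1) ≤ n+2+1 := by omega
          rw [if_neg h1, if_pos h2, if_pos h3]
          have e1 : n+1-k = k := by omega
          have e2 : n+2+1-(k+1) = k+1 := by omega
          rw [e1, e2, Nat.choose_self, Nat.choose_self]
        · -- 2k ≥ n+2
          have h1 : ¬ (2*(k+1) ≤ n+1+1) := by omega
          have h2 : ¬ (2*k ≤ n+1) := by omega
          have h3 : ¬ (2*(k+1) ≤ n+2+1) := by omega
          rw [if_neg h1, if_neg h2, if_neg h3]
      · -- 2k ≤ n
        have h1 : 2*(k+1) ≤ n+1+1 := by omega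
        have h2 : 2*k ≤ n+1 := by omega
        have h3 : 2*(k+1) ≤ n+2+1 := by omega
        rw [if_pos h1, if_pos h2, if_pos h3]
        have e1 : n+1+1-(k+1) = n+1-k := by omega
        have e2 : n+2+1-(k+1) = (n+1-k)+1 := by omega
        rw [e1, e2, Nat.choose_succ_succ]
        simp [Nat.succ_eq_add_one]
        omega

lemma step2 (n : ℕ) : ∑ S ∈ Indep n 1, S.card
    = ∑ k ∈ Finset.range (n+2), k * (IndepK n 1 k).card := by
  have hmaps : ∀ S ∈ Indep n 1, S.card ∈ Finset.range (n+2) := by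
    intro S hS
    rw [mem_Indep] at hS
    have := Finset.card_le_card hS.1
    rw [Nat.card_Icc] at this
    simp only [Finset.mem_range]
    omega
  rw [← Finset.sum_fiberwise_of_maps_to hmaps (fun S => S.card)]
  refine Finset.sum_congr rfl fun k _ => ?_
  have : (Indep n 1).filter (fun S => S.card = k) = IndepK n 1 k := rfl
  rw [this]
  rw [Finset.sum_congr rfl (fun S hS => (mem_IndepK.mp hS).2), Finset.sum_const,
    smul_eq_mul, Nat.mul_comm]

theorem stmt18 (n : ℕ) :
    coverCount n 1 =
      ∑ k ∈ Finset.Icc 1 ((n + 1) / 2), k * Nat.choose (n - k + 1) k := by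
  rw [step1, step2]
  have h1 : ∀ k ∈ Finset.range (n+2), k * (IndepK n 1 k).card
      = if k ∈ Finset.Icc 1 ((n+1)/2) then k * Nat.choose (n-k+1) k else 0 := by
    intro k _
    rw [indepK_card]
    simp only [Finset.mem_Icc]
    split_ifs with h2 h3 h3
    · have : n+1-k = n-k+1 := by omega
      rw [this]
    · have : k = 0 := by omega
      simp [this]
    · exfalso; omega
    · simp
  rw [Finset.sum_congr rfl h1, Finset.sum_ite_mem]
  congr 1
  rw [Finset.inter_eq_right]
  intro k hk
  simp only [Finset.mem_Icc] at hk
  simp only [Finset.mem_range]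
  omega
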